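/- arXiv:1409.3653 — 2 statements merged into one kernel-verified Lean document; each statement's English description precedes it below -/
import Mathlib

section
/- Fix a subset B ⊆ A and any estimator v̂ (a measurable function of the dataset D^n, of π, and of π_D). Then sup over environments Φ with 0 ≤ r_Φ(a) ≤ R_max and σ²_Φ(a) ≤ σ²(a) of E[(v̂(D^n) − v^π_Φ)²] ≥ P(A_1,…,A_n ∉ B) · (R_max²/4) · π(B)², where π(B) = Σ_{a∈B} π(a) and P(A_1,…,A_n ∉ B) = (1 − Σ_{a∈B} π_D(a))^n. -/
open MeasureTheory ProbabilityTheory ENNReal Filter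

noncomputable section

namespace OffPolicy

variable {K : ℕ}

/-- `π` is a probability mass function on the action set. -/
def IsPolicy (π : Fin K → ℝ) : Prop := (∀ a, 0 ≤ π a) ∧ ∑ a, π a = 1

/-- A behavior policy: a pmf with everywhere positive probabilities. -/
def IsBehaviorPolicy (πD : Fin K → ℝ) : Prop := (∀ a, 0 < πD a) ∧ ∑ a, πD a = 1

/-- The joint distribution of a single pair `(A, R)` with `A ~ πD` and `R ~ Φ(·|A)`. -/
def jointMeasure (πD : Fin K → ℝ) (Φ : Fin K → ProbabilityMeasure ℝ) :
    Measure (Fin K × ℝ) :=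
  ∑ a : Fin K, (πD a).toNNReal • ((Measure.dirac a).prod (Φ a : Measure ℝ))

instance jointMeasure_finite (πD : Fin K → ℝ) (Φ : Fin K → ProbabilityMeasure ℝ) :
    IsFiniteMeasure (jointMeasure πD Φ) := by
  unfold jointMeasure
  infer_instance

/-- The distribution of the i.i.d. dataset `D^n = ((A_1,R_1),…,(A_n,R_n))`. -/
def dataMeasure (n : ℕ) (πD : Fin K → ℝ) (Φ : Fin K → ProbabilityMeasure ℝ) :
    Measure (Fin n → Fin K × ℝ) :=
  Measure.pi fun _ => jointMeasure πD Φ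

/-- Mean reward `r_Φ(a)` of action `a`. -/
def envMean (Φ : Fin K → ProbabilityMeasure ℝ) (a : Fin K) : ℝ :=
  ∫ x, x ∂(Φ a : Measure ℝ)

/-- Reward variance `σ²_Φ(a)` of action `a`. -/
def envVar (Φ : Fin K → ProbabilityMeasure ℝ) (a : Fin K) : ℝ :=
  ∫ x, (x - envMean Φ a) ^ 2 ∂(Φ a : Measure ℝ)

/-- The value `v^π_Φ = Σ_a π(a) r_Φ(a)` of the target policy. -/
def value (π : Fin K → ℝ) (Φ : Fin K → ProbabilityMeasure ℝ) : ℝ :=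
  ∑ a, π a * envMean Φ a

/-- Mean squared error `E[(v̂(D^n) − v^π_Φ)²]` of an estimator. -/
def mse (n : ℕ) (π πD : Fin K → ℝ) (Φ : Fin K → ProbabilityMeasure ℝ)
    (est : (Fin n → Fin K × ℝ) → ℝ) : ℝ≥0∞ :=
  ∫⁻ d, ENNReal.ofReal ((est d - value π Φ) ^ 2) ∂(dataMeasure n πD Φ)

/-- Environments with square-integrable rewards, means within `[0, Rmax]`,
and variances bounded by `σ2`. -/
def ValidEnv (Rmax : ℝ) (σ2 : Fin K → ℝ) (Φ : Fin K → ProbabilityMeasure ℝ) : Prop :=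
  (∀ a, MemLp (fun x => x) 2 (Φ a : Measure ℝ)) ∧
  (∀ a, 0 ≤ envMean Φ a ∧ envMean Φ a ≤ Rmax) ∧
  (∀ a, envVar Φ a ≤ σ2 a)

/-- Minimax risk `R_n^*(π, πD, Rmax, σ²)`. -/
def minimaxRisk (n : ℕ) (π πD : Fin K → ℝ) (Rmax : ℝ) (σ2 : Fin K → ℝ) : ℝ≥0∞ :=
  ⨅ (est : (Fin n → Fin K × ℝ) → ℝ) (_ : Measurable est),
    ⨆ (Φ : Fin K → ProbabilityMeasure ℝ) (_ : ValidEnv Rmax σ2 Φ), mse n π πD Φ est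

/-- The likelihood ratio estimator. -/
def vLR (n : ℕ) (π πD : Fin K → ℝ) (d : Fin n → Fin K × ℝ) : ℝ :=
  (1 / (n : ℝ)) * ∑ i, (π (d i).1 / πD (d i).1) * (d i).2

/-- `n(a)`: the number of samples of action `a` in the dataset. -/
def cnt (n : ℕ) (d : Fin n → Fin K × ℝ) (a : Fin K) : ℕ :=
  (Finset.univ.filter fun i => (d i).1 = a).card

/-- `r̂(a) = R(a)/n(a)` if `n(a) > 0`, and `0` otherwise (division by zero is zero). -/
def rhat (n : ℕ) (d : Fin n → Fin K × ℝ) (a : Fin K) : ℝ :=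
  if 0 < cnt n d a then
    (∑ i ∈ Finset.univ.filter (fun i => (d i).1 = a), (d i).2) / (cnt n d a : ℝ)
  else 0

/-- The regression estimator. -/
def vReg (n : ℕ) (π : Fin K → ℝ) (d : Fin n → Fin K × ℝ) : ℝ :=
  ∑ a, π a * rhat n d a

/- auxiliary lemmas -/

lemma pi_restrict_eq {ι : Type*} [Fintype ι] {α : ι → Type*} [∀ i, MeasurableSpace (α i)]
    (μ : ∀ i, Measure (α i)) [∀ i, IsFiniteMeasure (μ i)]
    (S : ∀ i, Set (α i)) (hS : ∀ i, MeasurableSet (S i)) :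
    Measure.pi (fun i => (μ i).restrict (S i)) =
      (Measure.pi μ).restrict (Set.pi Set.univ S) := by
  refine Measure.pi_eq fun s hs => ?_
  rw [Measure.restrict_apply (MeasurableSet.univ_pi hs), ← Set.pi_inter_distrib,
    Measure.pi_pi]
  exact Finset.prod_congr rfl fun i _ => (Measure.restrict_apply (hs i)).symm

def diracEnv (r : Fin K → ℝ) : Fin K → ProbabilityMeasure ℝ :=
  fun a => ⟨Measure.dirac (r a), inferInstance⟩

lemma envMean_diracEnv (r : Fin K → ℝ) (a : Fin K) : envMean (diracEnv r) a = r a := by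
  simp [envMean, diracEnv, integral_dirac]

lemma validEnv_diracEnv {Rmax : ℝ} {σ2 : Fin K → ℝ} (hσ : ∀ a, 0 ≤ σ2 a)
    (r : Fin K → ℝ) (hr : ∀ a, 0 ≤ r a ∧ r a ≤ Rmax) :
    ValidEnv Rmax σ2 (diracEnv r) := by
  refine ⟨fun a => ?_, fun a => by rw [envMean_diracEnv]; exact hr a, fun a => ?_⟩
  · refine (memLp_const (r a)).ae_eq ?_
    show _ =ᵐ[(diracEnv r a : Measure ℝ)] _
    have : (diracEnv r a : Measure ℝ) = Measure.dirac (r a) := rfl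
    rw [Filter.EventuallyEq, this, ae_dirac_eq]
    exact Filter.eventually_pure.2 rfl
  · have : envVar (diracEnv r) a = 0 := by
      simp [envVar, diracEnv, envMean_diracEnv, integral_dirac]
    rw [this]; exact hσ a

lemma value_diracEnv (π : Fin K → ℝ) (r : Fin K → ℝ) :
    value π (diracEnv r) = ∑ a, π a * r a := by
  simp [value, envMean_diracEnv]

/-- for any fixed subset `B` of actions and any measurable estimator,
the worst-case MSE over valid environments is at least
`P(A_1,…,A_n ∉ B) · (R_max²/4) · π(B)²`, where `P(A_1,…,A_n ∉ B) = (1 − π_D(B))^n`. -/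
theorem sup_mse_lower_bound {K : ℕ} (n : ℕ)
    (π πD : Fin K → ℝ) (hπ : IsPolicy π) (hπD : IsBehaviorPolicy πD)
    (Rmax : ℝ) (hR : 0 < Rmax) (σ2 : Fin K → ℝ) (hσ : ∀ a, 0 ≤ σ2 a)
    (B : Finset (Fin K))
    (est : (Fin n → Fin K × ℝ) → ℝ) (hest : Measurable est) :
    ENNReal.ofReal ((1 - ∑ a ∈ B, πD a) ^ n * (Rmax ^ 2 / 4) * (∑ a ∈ B, π a) ^ 2) ≤
      ⨆ (Φ : Fin K → ProbabilityMeasure ℝ) (_ : ValidEnv Rmax σ2 Φ),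
        mse n π πD Φ est := by
  classical
  set q : ℝ := ∑ a ∈ B, π a with hq
  set p : ℝ := ∑ a ∈ B, πD a with hp
  have hq0 : 0 ≤ q := Finset.sum_nonneg fun a _ => hπ.1 a
  have hp1 : p ≤ 1 := by
    rw [hp, ← hπD.2]
    exact Finset.sum_le_sum_of_subset_of_nonneg (Finset.subset_univ B)
      (fun a _ _ => (hπD.1 a).le)
  have h1p : 0 ≤ 1 - p := by linarith
  set c : ℝ := Rmax * q with hcdef
  have hc0 : 0 ≤ c := mul_nonneg hR.le hq0
  -- the two environments
  set r1 : Fin K → ℝ := fun a => if a ∈ B then Rmax else 0 with hr1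
  set Φ0 : Fin K → ProbabilityMeasure ℝ := diracEnv (fun _ => 0) with hΦ0
  set Φ1 : Fin K → ProbabilityMeasure ℝ := diracEnv r1 with hΦ1
  have hv0 : ValidEnv Rmax σ2 Φ0 := validEnv_diracEnv hσ _ (fun a => ⟨le_refl 0, hR.le⟩)
  have hv1 : ValidEnv Rmax σ2 Φ1 := by
    refine validEnv_diracEnv hσ _ (fun a => ?_)
    by_cases h : a ∈ B <;> simp [hr1, h, hR.le]
  have hval0 : value π Φ0 = 0 := by simp [hΦ0, value_diracEnv]
  have hval1 : value π Φ1 = c := by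
    rw [hΦ1, value_diracEnv, hcdef, hq]
    have h : ∀ a : Fin K, π a * r1 a = if a ∈ B then Rmax * π a else 0 := by
      intro a; by_cases hab : a ∈ B <;> simp [hr1, hab, mul_comm]
    rw [Finset.sum_congr rfl fun a _ => h a, Finset.sum_ite_mem, Finset.univ_inter,
      ← Finset.mul_sum]
  -- the common restricted measure
  set S : Set (Fin K × ℝ) := {p : Fin K × ℝ | p.1 ∉ B} with hSdef
  have hSmeas : MeasurableSet S := by
    have : S = Prod.fst ⁻¹' ((↑B : Set (Fin K)))ᶜ := rfl
    rw [this]; exact measurable_fst (MeasurableSet.compl (by measurability))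
  have hkey : (jointMeasure πD Φ0).restrict S = (jointMeasure πD Φ1).restrict S := by
    ext t ht
    rw [Measure.restrict_apply ht, Measure.restrict_apply ht]
    unfold jointMeasure
    rw [Measure.finset_sum_apply, Measure.finset_sum_apply]
    refine Finset.sum_congr rfl fun a _ => ?_
    by_cases h : a ∈ B
    · have h0 : ((Φ0 a : Measure ℝ)) = Measure.dirac 0 := rfl
      have h1 : ((Φ1 a : Measure ℝ)) = Measure.dirac (r1 a) := rfl
      rw [Measure.smul_apply, Measure.smul_apply, h0, h1,
        Measure.dirac_prod_dirac, Measure.dirac_prod_dirac,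
        Measure.dirac_apply, Measure.dirac_apply]
      have hn0 : (a, (0:ℝ)) ∉ t ∩ S := fun hmem => hmem.2 h
      have hn1 : (a, r1 a) ∉ t ∩ S := fun hmem => hmem.2 h
      rw [Set.indicator_of_notMem hn0, Set.indicator_of_notMem hn1]
    · have : r1 a = 0 := by simp [hr1, h]
      have h0 : ((Φ0 a : Measure ℝ)) = Measure.dirac 0 := rfl
      have h1 : ((Φ1 a : Measure ℝ)) = Measure.dirac (r1 a) := rfl
      rw [h0, h1, this]
  have hpicongr : Measure.pi (fun _ : Fin n => (jointMeasure πD Φ0).restrict S) =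
      Measure.pi (fun _ : Fin n => (jointMeasure πD Φ1).restrict S) := by
    simp only [hkey]
  set dν : Measure (Fin n → Fin K × ℝ) :=
    Measure.pi (fun _ => (jointMeasure πD Φ0).restrict S) with hdν
  -- lower bounds for the two mses
  have hle0 : (∫⁻ d, ENNReal.ofReal ((est d) ^ 2) ∂dν) ≤ mse n π πD Φ0 est := by
    have hd : dν = (dataMeasure n πD Φ0).restrict (Set.pi Set.univ fun _ => S) :=
      pi_restrict_eq _ _ (fun _ => hSmeas)
    rw [mse, hval0, hd]
    simp only [sub_zero]
    exact lintegral_mono' Measure.restrict_le_self le_rfl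
  have hle1 : (∫⁻ d, ENNReal.ofReal ((est d - c) ^ 2) ∂dν) ≤ mse n π πD Φ1 est := by
    have hd : dν = (dataMeasure n πD Φ1).restrict (Set.pi Set.univ fun _ => S) :=
      hpicongr.trans (pi_restrict_eq _ _ (fun _ => hSmeas))
    rw [mse, hval1, hd]
    exact lintegral_mono' Measure.restrict_le_self le_rfl
  -- measurability
  have m0 : Measurable fun d => ENNReal.ofReal ((est d) ^ 2) :=
    ENNReal.measurable_ofReal.comp (hest.pow_const 2)
  -- the two-point bound
  have hsum : ENNReal.ofReal (c ^ 2 / 2) * dν Set.univ ≤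
      (∫⁻ d, ENNReal.ofReal ((est d) ^ 2) ∂dν) +
      (∫⁻ d, ENNReal.ofReal ((est d - c) ^ 2) ∂dν) := by
    rw [← lintegral_add_left m0]
    calc ENNReal.ofReal (c ^ 2 / 2) * dν Set.univ
        = ∫⁻ _, ENNReal.ofReal (c ^ 2 / 2) ∂dν := (lintegral_const _).symm
      _ ≤ _ := by
          refine lintegral_mono fun d => ?_
          rw [← ENNReal.ofReal_add (sq_nonneg _) (sq_nonneg _)]
          exact ENNReal.ofReal_le_ofReal (by nlinarith [sq_nonneg (2 * est d - c)])
  -- compute dν univ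
  have hνuniv : (jointMeasure πD Φ0).restrict S Set.univ = ENNReal.ofReal (1 - p) := by
    rw [Measure.restrict_apply_univ]
    unfold jointMeasure
    rw [Measure.finset_sum_apply]
    have hterm : ∀ a : Fin K, ((πD a).toNNReal • ((Measure.dirac a).prod (Φ0 a : Measure ℝ))) S
        = if a ∈ Bᶜ then ENNReal.ofReal (πD a) else 0 := by
      intro a
      have h0 : ((Φ0 a : Measure ℝ)) = Measure.dirac 0 := rfl
      rw [Measure.smul_apply, h0, Measure.dirac_prod_dirac, Measure.dirac_apply]
      by_cases h : a ∈ B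
      · have : (a, (0:ℝ)) ∉ S := fun hmem => hmem h
        rw [Set.indicator_of_notMem this]
        simp [h]
      · have : (a, (0:ℝ)) ∈ S := h
        rw [Set.indicator_of_mem this]
        simp only [Finset.mem_compl, h, not_false_iff, if_true, Pi.one_apply,
          ENNReal.smul_def, smul_eq_mul, mul_one]
        rfl
    rw [Finset.sum_congr rfl fun a _ => hterm a, Finset.sum_ite_mem, Finset.univ_inter,
      ← ENNReal.ofReal_sum_of_nonneg (fun a _ => (hπD.1 a).le)]
    congr 1
    have h2 := Finset.sum_compl_add_sum B πD
    have h3 := hπD.2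
    linarith [h2, h3, hp]
  have hduniv : dν Set.univ = ENNReal.ofReal ((1 - p) ^ n) := by
    rw [hdν, Measure.pi_univ, Finset.prod_const, Finset.card_univ, Fintype.card_fin,
      hνuniv, ← ENNReal.ofReal_pow h1p]
  -- assemble
  set Ssup := ⨆ (Φ : Fin K → ProbabilityMeasure ℝ) (_ : ValidEnv Rmax σ2 Φ),
      mse n π πD Φ est with hSsup
  have hs0 : mse n π πD Φ0 est ≤ Ssup :=
    le_iSup_of_le Φ0 (le_iSup_of_le hv0 le_rfl)
  have hs1 : mse n π πD Φ1 est ≤ Ssup :=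
    le_iSup_of_le Φ1 (le_iSup_of_le hv1 le_rfl)
  have hchain : ENNReal.ofReal ((1 - p) ^ n * (Rmax ^ 2 / 4) * q ^ 2) * 2 ≤ Ssup * 2 := by
    have heq : ENNReal.ofReal ((1 - p) ^ n * (Rmax ^ 2 / 4) * q ^ 2) * 2
        = ENNReal.ofReal (c ^ 2 / 2) * ENNReal.ofReal ((1 - p) ^ n) := by
      rw [← ENNReal.ofReal_mul (by positivity), ← ENNReal.ofReal_ofNat 2,
        ← ENNReal.ofReal_mul (by positivity)]
      congr 1
      rw [hcdef]; ring
    calc ENNReal.ofReal ((1 - p) ^ n * (Rmax ^ 2 / 4) * q ^ 2) * 2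
        = ENNReal.ofReal (c ^ 2 / 2) * dν Set.univ := by rw [heq, hduniv]
      _ ≤ _ + _ := hsum
      _ ≤ mse n π πD Φ0 est + mse n π πD Φ1 est := add_le_add hle0 hle1
      _ ≤ Ssup + Ssup := add_le_add hs0 hs1
      _ = Ssup * 2 := by ring
  exact (ENNReal.mul_le_mul_iff_left (by norm_num) (by norm_num)).1 hchain


end OffPolicy
end
end

section
/- Assume r_Φ(a) ≥ 0 for all a. Then the regression estimator satisfies MSE(v̂_Reg) ≤ V_{0,n} + (V₁ + V_{3,n})/n, where p_{a,n} = (1 − π_D(a))^n, V_{0,n} = (Σ_a π(a) r_Φ(a) p_{a,n})² + Σ_a π(a)² r_Φ(a)² p_{a,n}(1 − p_{a,n}), V₁ = Σ_a π(a)² σ²_Φ(a)/π_D(a), and V_{3,n} = Σ_a E[ 1{n(a)>0} · n/n(a) − 1/π_D(a) ] · π(a)² σ²_Φ(a). -/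
open MeasureTheory ProbabilityTheory ENNReal Filter

noncomputable section

namespace OffPolicy

variable {K : ℕ}

section PiAux

variable {ι : Type*} [Fintype ι] [DecidableEq ι]
variable (μ : ι → Measure ℝ) [∀ i, IsProbabilityMeasure (μ i)]

lemma pi_map_eval (i : ι) : (Measure.pi μ).map (Function.eval i) = μ i := by
  ext s hs
  rw [Measure.map_apply (measurable_pi_apply i) hs, ← Set.univ_pi_update_univ, Measure.pi_pi]
  refine Fintype.prod_eq_single i (fun j hj => ?_) |>.trans (by rw [Function.update_self])
  rw [Function.update_of_ne hj]
  exact measure_univ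

lemma pi_map_pair {i j : ι} (hij : i ≠ j) :
    (Measure.pi μ).map (fun x => (x i, x j)) = (μ i).prod (μ j) := by
  have hmeas : Measurable (fun x : ι → ℝ => (x i, x j)) :=
    (measurable_pi_apply i).prodMk (measurable_pi_apply j)
  refine (Measure.prod_eq fun s t hs ht => ?_).symm
  rw [Measure.map_apply hmeas (hs.prod ht)]
  have hpre : (fun x : ι → ℝ => (x i, x j)) ⁻¹' (s ×ˢ t) =
      Set.pi Set.univ (Function.update (Function.update (fun _ => Set.univ) i s) j t) := by
    ext x
    simp only [Set.mem_preimage, Set.mem_prod, Set.mem_pi, Set.mem_univ, true_implies]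
    constructor
    · rintro ⟨h1, h2⟩ k
      rcases eq_or_ne k j with rfl | hkj
      · simpa [Function.update_self] using h2
      rcases eq_or_ne k i with rfl | hki
      · simpa [Function.update_of_ne hkj, Function.update_self] using h1
      · simp [Function.update_of_ne hkj, Function.update_of_ne hki]
    · intro h
      constructor
      · have := h i
        simpa [Function.update_of_ne hij, Function.update_self] using this
      · have := h j
        simpa [Function.update_self] using this
  rw [hpre, Measure.pi_pi]
  rw [Finset.prod_eq_mul_of_mem i j (Finset.mem_univ i) (Finset.mem_univ j) hij ?_]
  · rw [Function.update_of_ne hij, Function.update_self, Function.update_self]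
  · intro k _ hk
    rw [Function.update_of_ne hk.2, Function.update_of_ne hk.1]
    exact measure_univ

lemma integral_pi_eval (i : ι) (f : ℝ → ℝ) (hf : AEStronglyMeasurable f (μ i)) :
    ∫ x, f (x i) ∂(Measure.pi μ) = ∫ y, f y ∂(μ i) := by
  rw [← pi_map_eval μ i] at hf ⊢
  exact (integral_map (measurable_pi_apply i).aemeasurable hf).symm

lemma integral_pi_pair {i j : ι} (hij : i ≠ j) (f g : ℝ → ℝ)
    (hf : Measurable f) (hg : Measurable g) :
    ∫ x, f (x i) * g (x j) ∂(Measure.pi μ) = (∫ y, f y ∂(μ i)) * ∫ y, g y ∂(μ j) := by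
  have hmeas : Measurable (fun x : ι → ℝ => (x i, x j)) :=
    (measurable_pi_apply i).prodMk (measurable_pi_apply j)
  have hF : AEStronglyMeasurable (fun z : ℝ × ℝ => f z.1 * g z.2) ((μ i).prod (μ j)) :=
    ((hf.comp measurable_fst).mul (hg.comp measurable_snd)).aestronglyMeasurable
  rw [← integral_prod_mul, ← pi_map_pair μ hij]
  rw [← pi_map_pair μ hij] at hF
  exact (integral_map hmeas.aemeasurable hF).symm

lemma integrable_pi_eval (i : ι) (f : ℝ → ℝ) (hfm : Measurable f)
    (hf : Integrable f (μ i)) : Integrable (fun x => f (x i)) (Measure.pi μ) := by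
  rw [← pi_map_eval μ i] at hf
  exact (integrable_map_measure hfm.aestronglyMeasurable
    (measurable_pi_apply i).aemeasurable).mp hf

lemma integrable_pi_pair {i j : ι} (hij : i ≠ j) (f g : ℝ → ℝ)
    (hfm : Measurable f) (hgm : Measurable g)
    (hf : Integrable f (μ i)) (hg : Integrable g (μ j)) :
    Integrable (fun x => f (x i) * g (x j)) (Measure.pi μ) := by
  have hmeas : Measurable (fun x : ι → ℝ => (x i, x j)) :=
    (measurable_pi_apply i).prodMk (measurable_pi_apply j)
  have : Integrable (fun z : ℝ × ℝ => f z.1 * g z.2) ((μ i).prod (μ j)) := hf.mul_prod hg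
  rw [← pi_map_pair μ hij] at this
  exact (integrable_map_measure
    ((hfm.comp measurable_fst).mul (hgm.comp measurable_snd)).aestronglyMeasurable
    hmeas.aemeasurable).mp this

set_option linter.unusedSectionVars false

/-- centered coordinate function -/
def gg (c : ι → ℝ) (i : ι) : ℝ → ℝ := fun y => c i * (y - ∫ z, z ∂(μ i))

lemma gg_measurable (c : ι → ℝ) (i : ι) : Measurable (gg μ c i) :=
  (measurable_id.sub measurable_const).const_mul _

lemma gg_memLp (h2 : ∀ i, MemLp (fun y : ℝ => y) 2 (μ i)) (c : ι → ℝ) (i : ι) :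
    MemLp (gg μ c i) 2 (μ i) :=
  ((h2 i).sub (memLp_const _)).const_mul _

lemma gg_integrable (h2 : ∀ i, MemLp (fun y : ℝ => y) 2 (μ i)) (c : ι → ℝ) (i : ι) :
    Integrable (gg μ c i) (μ i) :=
  (gg_memLp μ h2 c i).integrable one_le_two

lemma gg_integral (h2 : ∀ i, MemLp (fun y : ℝ => y) 2 (μ i)) (c : ι → ℝ) (i : ι) :
    ∫ y, gg μ c i y ∂(μ i) = 0 := by
  unfold gg
  rw [integral_const_mul, integral_sub ((h2 i).integrable one_le_two) (integrable_const _),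
    integral_const]
  simp

lemma gg_sq_integrable (h2 : ∀ i, MemLp (fun y : ℝ => y) 2 (μ i)) (c : ι → ℝ) (i : ι) :
    Integrable (fun y => gg μ c i y * gg μ c i y) (μ i) := by
  have := (gg_memLp μ h2 c i).integrable_sq
  refine this.congr (ae_of_all _ fun y => ?_)
  ring

lemma ggpair_integrable (h2 : ∀ i, MemLp (fun y : ℝ => y) 2 (μ i)) (c : ι → ℝ) (i j : ι) :
    Integrable (fun x : ι → ℝ => gg μ c i (x i) * gg μ c j (x j)) (Measure.pi μ) := by
  rcases eq_or_ne i j with rfl | hij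
  · exact integrable_pi_eval μ i _ ((gg_measurable μ c i).mul (gg_measurable μ c i))
      (gg_sq_integrable μ h2 c i)
  · exact integrable_pi_pair μ hij _ _ (gg_measurable μ c i) (gg_measurable μ c j)
      (gg_integrable μ h2 c i) (gg_integrable μ h2 c j)

lemma sum_rewrite (c : ι → ℝ) (b : ℝ) (x : ι → ℝ) :
    ∑ i, c i * x i + b = ∑ i, gg μ c i (x i) + (∑ i, c i * (∫ z, z ∂(μ i)) + b) := by
  unfold gg
  rw [Finset.sum_congr rfl (fun i _ => mul_sub (c i) (x i) _), Finset.sum_sub_distrib]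
  ring

lemma key_fun_eq (c : ι → ℝ) (b : ℝ) (x : ι → ℝ) :
    (∑ i, c i * x i + b) ^ 2 =
      (∑ i, ∑ j, gg μ c i (x i) * gg μ c j (x j)) +
      (2 * (∑ i, c i * (∫ z, z ∂(μ i)) + b)) * (∑ i, gg μ c i (x i)) +
      (∑ i, c i * (∫ z, z ∂(μ i)) + b) ^ 2 := by
  rw [sum_rewrite μ c b x, add_sq, pow_two (∑ i, gg μ c i (x i)), Finset.sum_mul_sum]
  ring

lemma key_integrable (h2 : ∀ i, MemLp (fun y : ℝ => y) 2 (μ i)) (c : ι → ℝ) (b : ℝ) :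
    Integrable (fun x : ι → ℝ => (∑ i, c i * x i + b) ^ 2) (Measure.pi μ) := by
  have hA : Integrable (fun x : ι → ℝ => ∑ i, ∑ j, gg μ c i (x i) * gg μ c j (x j))
      (Measure.pi μ) :=
    integrable_finset_sum _ fun i _ => integrable_finset_sum _ fun j _ =>
      ggpair_integrable μ h2 c i j
  have hB : Integrable (fun x : ι → ℝ =>
      (2 * (∑ i, c i * (∫ z, z ∂(μ i)) + b)) * (∑ i, gg μ c i (x i))) (Measure.pi μ) :=
    ((integrable_finset_sum _ fun i _ => integrable_pi_eval μ i _
      (gg_measurable μ c i) (gg_integrable μ h2 c i)).const_mul _)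
  have hS : Integrable (fun x : ι → ℝ =>
      (∑ i, ∑ j, gg μ c i (x i) * gg μ c j (x j)) +
      (2 * (∑ i, c i * (∫ z, z ∂(μ i)) + b)) * (∑ i, gg μ c i (x i)) +
      (∑ i, c i * (∫ z, z ∂(μ i)) + b) ^ 2) (Measure.pi μ) :=
    (hA.add hB).add (integrable_const _)
  refine hS.congr (ae_of_all _ fun x => ?_)
  exact (key_fun_eq μ c b x).symm

lemma key_integral (h2 : ∀ i, MemLp (fun y : ℝ => y) 2 (μ i)) (c : ι → ℝ) (b : ℝ) :
    ∫ x, (∑ i, c i * x i + b) ^ 2 ∂(Measure.pi μ) =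
      ∑ i, (c i) ^ 2 * (∫ y, (y - ∫ z, z ∂(μ i)) ^ 2 ∂(μ i)) +
      (∑ i, c i * (∫ z, z ∂(μ i)) + b) ^ 2 := by
  have hA : Integrable (fun x : ι → ℝ => ∑ i, ∑ j, gg μ c i (x i) * gg μ c j (x j))
      (Measure.pi μ) :=
    integrable_finset_sum _ fun i _ => integrable_finset_sum _ fun j _ =>
      ggpair_integrable μ h2 c i j
  have hB : Integrable (fun x : ι → ℝ =>
      (2 * (∑ i, c i * (∫ z, z ∂(μ i)) + b)) * (∑ i, gg μ c i (x i))) (Measure.pi μ) :=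
    ((integrable_finset_sum _ fun i _ => integrable_pi_eval μ i _
      (gg_measurable μ c i) (gg_integrable μ h2 c i)).const_mul _)
  have hsingle : ∀ i : ι, ∫ x : ι → ℝ, gg μ c i (x i) ∂(Measure.pi μ) = 0 := fun i => by
    rw [integral_pi_eval μ i _ (gg_measurable μ c i).aestronglyMeasurable,
      gg_integral μ h2 c i]
  have hdiag : ∀ i : ι,
      ∫ x : ι → ℝ, ∑ j, gg μ c i (x i) * gg μ c j (x j) ∂(Measure.pi μ) =
        (c i) ^ 2 * ∫ y, (y - ∫ z, z ∂(μ i)) ^ 2 ∂(μ i) := by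
    intro i
    rw [integral_finset_sum _ (fun j _ => ggpair_integrable μ h2 c i j)]
    rw [Finset.sum_eq_single_of_mem i (Finset.mem_univ i) (fun j _ hj => ?_)]
    · rw [integral_pi_eval μ i (fun y => gg μ c i y * gg μ c i y)
        ((gg_measurable μ c i).mul (gg_measurable μ c i)).aestronglyMeasurable]
      rw [integral_congr_ae (ae_of_all _ (fun y => show gg μ c i y * gg μ c i y =
          (c i) ^ 2 * (y - ∫ z, z ∂(μ i)) ^ 2 by unfold gg; ring)), integral_const_mul]
    · rw [integral_pi_pair μ (Ne.symm hj) _ _ (gg_measurable μ c i) (gg_measurable μ c j),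
        gg_integral μ h2 c i, zero_mul]
  calc ∫ x, (∑ i, c i * x i + b) ^ 2 ∂(Measure.pi μ)
      = ∫ x, ((∑ i, ∑ j, gg μ c i (x i) * gg μ c j (x j)) +
          (2 * (∑ i, c i * (∫ z, z ∂(μ i)) + b)) * (∑ i, gg μ c i (x i)) +
          (∑ i, c i * (∫ z, z ∂(μ i)) + b) ^ 2) ∂(Measure.pi μ) :=
        integral_congr_ae (ae_of_all _ fun x => key_fun_eq μ c b x)
    _ = (∫ x, ((∑ i, ∑ j, gg μ c i (x i) * gg μ c j (x j)) +
          (2 * (∑ i, c i * (∫ z, z ∂(μ i)) + b)) * (∑ i, gg μ c i (x i))) ∂(Measure.pi μ)) +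
          (∑ i, c i * (∫ z, z ∂(μ i)) + b) ^ 2 := by
        have hAB : Integrable (fun x : ι → ℝ =>
            (∑ i, ∑ j, gg μ c i (x i) * gg μ c j (x j)) +
            (2 * (∑ i, c i * (∫ z, z ∂(μ i)) + b)) * (∑ i, gg μ c i (x i))) (Measure.pi μ) :=
          hA.add hB
        rw [integral_add hAB (integrable_const _), integral_const]
        simp
    _ = ∑ i, (c i) ^ 2 * (∫ y, (y - ∫ z, z ∂(μ i)) ^ 2 ∂(μ i)) +
          (∑ i, c i * (∫ z, z ∂(μ i)) + b) ^ 2 := by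
        rw [integral_add hA hB]
        rw [integral_finset_sum _ (fun i _ => integrable_finset_sum _
          (fun j _ => ggpair_integrable μ h2 c i j))]
        rw [integral_const_mul, integral_finset_sum _ (fun i _ => integrable_pi_eval μ i _
          (gg_measurable μ c i) (gg_integrable μ h2 c i))]
        simp only [hsingle, hdiag]
        simp

end PiAux

section Comb

variable {K n : ℕ}

/-- number of occurrences of action `a` in the assignment `t` -/
def mcount (t : Fin n → Fin K) (a : Fin K) : ℕ :=
  (Finset.univ.filter fun i => t i = a).card

lemma mcount_eq_zero_iff (t : Fin n → Fin K) (a : Fin K) :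
    mcount t a = 0 ↔ ∀ i, t i ≠ a := by
  unfold mcount
  rw [Finset.card_eq_zero, Finset.filter_eq_empty_iff]
  simp

lemma sum_prod_comp (f : Fin K → ℝ) :
    ∑ t : Fin n → Fin K, ∏ i, f (t i) = (∑ a, f a) ^ n := by
  rw [← Fintype.piFinset_univ, ← Finset.prod_univ_sum]
  simp

variable (πD : Fin K → ℝ)

lemma indicator_prod_eq (t : Fin n → Fin K) (a b : Fin K) :
    (∏ i, πD (t i)) * (if mcount t a = 0 then (1:ℝ) else 0) *
      (if mcount t b = 0 then (1:ℝ) else 0) =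
    ∏ i, (if t i = a ∨ t i = b then 0 else πD (t i)) := by
  by_cases ha : mcount t a = 0
  · by_cases hb : mcount t b = 0
    · rw [if_pos ha, if_pos hb, mul_one, mul_one]
      refine Finset.prod_congr rfl fun i _ => ?_
      rw [mcount_eq_zero_iff] at ha hb
      rw [if_neg (by push_neg; exact ⟨ha i, hb i⟩)]
    · rw [if_neg hb, mul_zero]
      rw [mcount_eq_zero_iff] at hb
      push_neg at hb
      obtain ⟨i, hi⟩ := hb
      have hz : (if t i = a ∨ t i = b then (0:ℝ) else πD (t i)) = 0 := if_pos (Or.inr hi)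
      exact (Finset.prod_eq_zero (Finset.mem_univ i) hz).symm
  · rw [if_neg ha, mul_zero, zero_mul]
    rw [mcount_eq_zero_iff] at ha
    push_neg at ha
    obtain ⟨i, hi⟩ := ha
    have hz : (if t i = a ∨ t i = b then (0:ℝ) else πD (t i)) = 0 := if_pos (Or.inl hi)
    exact (Finset.prod_eq_zero (Finset.mem_univ i) hz).symm

lemma sum_if_or_eq (a : Fin K) :
    (∑ k, if k = a ∨ k = a then (0:ℝ) else πD k) = (∑ k, πD k) - πD a := by
  have : ∀ k, (if k = a ∨ k = a then (0:ℝ) else πD k)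
      = πD k - (if k = a then πD k else 0) := by
    intro k
    by_cases h : k = a <;> simp [h]
  rw [Finset.sum_congr rfl fun k _ => this k, Finset.sum_sub_distrib,
    Finset.sum_ite_eq' Finset.univ a πD]
  simp

lemma sum_if_or_ne (a b : Fin K) (hab : a ≠ b) :
    (∑ k, if k = a ∨ k = b then (0:ℝ) else πD k) = (∑ k, πD k) - πD a - πD b := by
  have : ∀ k, (if k = a ∨ k = b then (0:ℝ) else πD k)
      = πD k - (if k = a then πD k else 0) - (if k = b then πD k else 0) := by
    intro k
    by_cases h1 : k = a
    · subst h1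
      simp [hab]
    · by_cases h2 : k = b
      · subst h2
        simp [h1]
      · simp [h1, h2]
  rw [Finset.sum_congr rfl fun k _ => this k]
  rw [Finset.sum_sub_distrib, Finset.sum_sub_distrib,
    Finset.sum_ite_eq' Finset.univ a πD, Finset.sum_ite_eq' Finset.univ b πD]
  simp

lemma Q_diag (a : Fin K) :
    ∑ t : Fin n → Fin K, (∏ i, πD (t i)) * (if mcount t a = 0 then (1:ℝ) else 0) *
      (if mcount t a = 0 then (1:ℝ) else 0) = ((∑ k, πD k) - πD a) ^ n := by
  rw [Finset.sum_congr rfl fun t _ => indicator_prod_eq πD t a a,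
    sum_prod_comp (fun k => if k = a ∨ k = a then (0:ℝ) else πD k), sum_if_or_eq]

lemma Q_off (a b : Fin K) (hab : a ≠ b) :
    ∑ t : Fin n → Fin K, (∏ i, πD (t i)) * (if mcount t a = 0 then (1:ℝ) else 0) *
      (if mcount t b = 0 then (1:ℝ) else 0) = ((∑ k, πD k) - πD a - πD b) ^ n := by
  rw [Finset.sum_congr rfl fun t _ => indicator_prod_eq πD t a b,
    sum_prod_comp (fun k => if k = a ∨ k = b then (0:ℝ) else πD k), sum_if_or_ne πD a b hab]

/-- the bias term bound (Claim 2) -/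
lemma bias_bound (hπD : ∀ a, 0 < πD a) (hsum : ∑ a, πD a = 1)
    (d : Fin K → ℝ) (hd : ∀ a, 0 ≤ d a) :
    ∑ t : Fin n → Fin K, (∏ i, πD (t i)) *
        (∑ a, d a * (if mcount t a = 0 then (1:ℝ) else 0)) ^ 2 ≤
      (∑ a, d a * (1 - πD a) ^ n) ^ 2 +
        ∑ a, d a ^ 2 * ((1 - πD a) ^ n * (1 - (1 - πD a) ^ n)) := by
  set p : Fin K → ℝ := fun a => (1 - πD a) ^ n with hp
  have key : ∑ t : Fin n → Fin K, (∏ i, πD (t i)) *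
      (∑ a, d a * (if mcount t a = 0 then (1:ℝ) else 0)) ^ 2 =
      ∑ a, ∑ b, d a * d b *
        (∑ t : Fin n → Fin K, (∏ i, πD (t i)) * (if mcount t a = 0 then (1:ℝ) else 0) *
          (if mcount t b = 0 then (1:ℝ) else 0)) := by
    have h1 : ∀ t : Fin n → Fin K, (∏ i, πD (t i)) *
        (∑ a, d a * (if mcount t a = 0 then (1:ℝ) else 0)) ^ 2 =
        ∑ a, ∑ b, d a * d b *
          ((∏ i, πD (t i)) * (if mcount t a = 0 then (1:ℝ) else 0) *
            (if mcount t b = 0 then (1:ℝ) else 0)) := by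
      intro t
      rw [pow_two, Finset.sum_mul_sum]
      rw [Finset.mul_sum]
      refine Finset.sum_congr rfl fun a _ => ?_
      rw [Finset.mul_sum]
      refine Finset.sum_congr rfl fun b _ => ?_
      ring
    rw [Finset.sum_congr rfl fun t _ => h1 t]
    rw [Finset.sum_comm]
    refine Finset.sum_congr rfl fun a _ => ?_
    rw [Finset.sum_comm]
    refine Finset.sum_congr rfl fun b _ => ?_
    rw [← Finset.mul_sum]
  rw [key]
  have hle : ∀ a b : Fin K, d a * d b *
      (∑ t : Fin n → Fin K, (∏ i, πD (t i)) * (if mcount t a = 0 then (1:ℝ) else 0) *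
        (if mcount t b = 0 then (1:ℝ) else 0)) ≤
      d a * d b * (p a * p b) + (if a = b then d a ^ 2 * (p a * (1 - p a)) else 0) := by
    intro a b
    rcases eq_or_ne a b with rfl | hab
    · rw [Q_diag πD a, hsum, if_pos rfl]
      have hpa : (1 - πD a) ^ n = p a := rfl
      rw [hpa]
      exact le_of_eq (by ring)
    · rw [Q_off πD a b hab, hsum, if_neg hab, add_zero]
      have h0 : (0:ℝ) ≤ 1 - πD a - πD b := by
        have hsub : πD a + πD b ≤ ∑ k, πD k := by
          have := Finset.sum_le_sum_of_subset_of_nonneg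
            (Finset.subset_univ {a, b}) (fun k _ _ => (hπD k).le)
          rwa [Finset.sum_pair hab] at this
        rw [hsum] at hsub
        linarith
      have hQle : (1 - πD a - πD b) ^ n ≤ p a * p b := by
        rw [hp]
        have h1 : (1 - πD a - πD b) ≤ (1 - πD a) * (1 - πD b) := by nlinarith [ (hπD a).le, (hπD b).le]
        calc (1 - πD a - πD b) ^ n ≤ ((1 - πD a) * (1 - πD b)) ^ n := pow_le_pow_left₀ h0 h1 n
          _ = (1 - πD a) ^ n * (1 - πD b) ^ n := mul_pow _ _ n
      exact mul_le_mul_of_nonneg_left hQle (mul_nonneg (hd a) (hd b))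
  calc ∑ a, ∑ b, d a * d b *
        (∑ t : Fin n → Fin K, (∏ i, πD (t i)) * (if mcount t a = 0 then (1:ℝ) else 0) *
          (if mcount t b = 0 then (1:ℝ) else 0))
      ≤ ∑ a, ∑ b, (d a * d b * (p a * p b) +
          (if a = b then d a ^ 2 * (p a * (1 - p a)) else 0)) :=
        Finset.sum_le_sum fun a _ => Finset.sum_le_sum fun b _ => hle a b
    _ = (∑ a, d a * p a) ^ 2 + ∑ a, d a ^ 2 * (p a * (1 - p a)) := by
        rw [Finset.sum_congr rfl (fun a _ => Finset.sum_add_distrib),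
          Finset.sum_add_distrib]
        congr 1
        · rw [pow_two, Finset.sum_mul_sum]
          refine Finset.sum_congr rfl fun a _ => Finset.sum_congr rfl fun b _ => by ring
        · refine Finset.sum_congr rfl fun a _ => ?_
          rw [Finset.sum_ite_eq Finset.univ a (fun b => d a ^ 2 * (p a * (1 - p a)))]
          simp

/-- the variance term identity (Claim 1) -/
lemma variance_identity (hn : 0 < n) (hsum : ∑ a, πD a = 1) (u : Fin K → ℝ) :
    ∑ t : Fin n → Fin K, (∏ i, πD (t i)) *
        (∑ a, if 0 < mcount t a then u a / (mcount t a : ℝ) else 0) =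
      ((∑ a, u a / πD a) +
        ∑ a, (∑ t : Fin n → Fin K, (∏ i, πD (t i)) *
          ((if 0 < mcount t a then (n : ℝ) / (mcount t a : ℝ) else 0) - 1 / πD a)) * u a) / n := by
  have hn' : (n : ℝ) ≠ 0 := Nat.cast_ne_zero.mpr hn.ne'
  have hw1 : ∑ t : Fin n → Fin K, ∏ i, πD (t i) = 1 := by
    rw [sum_prod_comp πD, hsum, one_pow]
  have hsplit : ∀ a : Fin K,
      (∑ t : Fin n → Fin K, (∏ i, πD (t i)) *
        ((if 0 < mcount t a then (n : ℝ) / (mcount t a : ℝ) else 0) - 1 / πD a)) =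
      (∑ t : Fin n → Fin K, (∏ i, πD (t i)) *
        (if 0 < mcount t a then (n : ℝ) / (mcount t a : ℝ) else 0)) - 1 / πD a := by
    intro a
    rw [Finset.sum_congr rfl fun t _ => mul_sub (∏ i, πD (t i)) _ _,
      Finset.sum_sub_distrib, ← Finset.sum_mul, hw1, one_mul]
  rw [Finset.sum_congr rfl fun a (_ : a ∈ Finset.univ) => congrArg (· * u a) (hsplit a)]
  have hcomb : (∑ a, u a / πD a) +
      ∑ a, ((∑ t : Fin n → Fin K, (∏ i, πD (t i)) *
        (if 0 < mcount t a then (n : ℝ) / (mcount t a : ℝ) else 0)) - 1 / πD a) * u a =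
      ∑ a, (∑ t : Fin n → Fin K, (∏ i, πD (t i)) *
        (if 0 < mcount t a then (n : ℝ) / (mcount t a : ℝ) else 0)) * u a := by
    rw [← Finset.sum_add_distrib]
    refine Finset.sum_congr rfl fun a _ => ?_
    ring
  rw [hcomb, Finset.sum_div]
  calc ∑ t : Fin n → Fin K, (∏ i, πD (t i)) *
          (∑ a, if 0 < mcount t a then u a / (mcount t a : ℝ) else 0)
      = ∑ t : Fin n → Fin K, ∑ a,
          (∏ i, πD (t i)) * (if 0 < mcount t a then u a / (mcount t a : ℝ) else 0) :=
        Finset.sum_congr rfl fun t _ => Finset.mul_sum _ _ _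
    _ = ∑ a, ∑ t : Fin n → Fin K,
          (∏ i, πD (t i)) * (if 0 < mcount t a then u a / (mcount t a : ℝ) else 0) :=
        Finset.sum_comm
    _ = ∑ a, (∑ t : Fin n → Fin K, (∏ i, πD (t i)) *
          (if 0 < mcount t a then (n : ℝ) / (mcount t a : ℝ) else 0)) * u a / n := by
        refine Finset.sum_congr rfl fun a _ => ?_
        rw [Finset.sum_mul, Finset.sum_div]
        refine Finset.sum_congr rfl fun t _ => ?_
        by_cases h : 0 < mcount t a
        · rw [if_pos h, if_pos h]
          have hm : (mcount t a : ℝ) ≠ 0 := Nat.cast_ne_zero.mpr h.ne'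
          field_simp
        · rw [if_neg h, if_neg h]
          simp

end Comb

variable {K : ℕ}

section Decomp

variable (n : ℕ) (πD : Fin K → ℝ) (Φ : Fin K → ProbabilityMeasure ℝ)

/-- the embedding of reward vectors given an action assignment -/
def emb (t : Fin n → Fin K) : (Fin n → ℝ) → (Fin n → Fin K × ℝ) :=
  fun x i => (t i, x i)

lemma measurable_emb (t : Fin n → Fin K) : Measurable (emb n t) :=
  measurable_pi_lambda _ fun i => measurable_const.prodMk (measurable_pi_apply i)

lemma pi_dirac_eq_map (t : Fin n → Fin K) :
    Measure.pi (fun i => ((Φ (t i) : Measure ℝ)).map (Prod.mk (t i))) =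
      (Measure.pi fun i => (Φ (t i) : Measure ℝ)).map (emb n t) := by
  haveI : ∀ i : Fin n, IsProbabilityMeasure (((Φ (t i) : Measure ℝ)).map (Prod.mk (t i))) :=
    fun i => Measure.isProbabilityMeasure_map measurable_prodMk_left.aemeasurable
  refine Measure.pi_eq fun s hs => ?_
  rw [Measure.map_apply (measurable_emb n t) (MeasurableSet.univ_pi hs)]
  have hpre : emb n t ⁻¹' (Set.pi Set.univ s) =
      Set.pi Set.univ (fun i => Prod.mk (t i) ⁻¹' s i) := by
    ext x
    simp [emb, Set.mem_pi]
  rw [hpre, Measure.pi_pi]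
  exact Finset.prod_congr rfl fun i _ =>
    (Measure.map_apply measurable_prodMk_left (hs i)).symm

lemma dataMeasure_eq_sum :
    dataMeasure n πD Φ = ∑ t : Fin n → Fin K,
      (∏ i, ENNReal.ofReal (πD (t i))) •
        ((Measure.pi fun i => (Φ (t i) : Measure ℝ)).map (emb n t)) := by
  unfold dataMeasure
  refine Measure.pi_eq fun s hs => ?_
  rw [Measure.finset_sum_apply]
  have hterm : ∀ t : Fin n → Fin K,
      ((∏ i, ENNReal.ofReal (πD (t i))) •
        ((Measure.pi fun i => (Φ (t i) : Measure ℝ)).map (emb n t))) (Set.pi Set.univ s) =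
      ∏ i, (ENNReal.ofReal (πD (t i)) *
        (((Φ (t i) : Measure ℝ)).map (Prod.mk (t i))) (s i)) := by
    intro t
    rw [Measure.smul_apply, ← pi_dirac_eq_map n Φ t, Measure.pi_pi, smul_eq_mul,
      Finset.prod_mul_distrib]
  simp only [hterm]
  have hjoint : ∀ i : Fin n, jointMeasure πD Φ (s i) =
      ∑ a : Fin K, ENNReal.ofReal (πD a) *
        (((Φ a : Measure ℝ)).map (Prod.mk a)) (s i) := by
    intro i
    unfold jointMeasure
    rw [Measure.finset_sum_apply]
    refine Finset.sum_congr rfl fun a _ => ?_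
    rw [Measure.smul_apply, Measure.dirac_prod]
    rfl
  simp only [hjoint]
  rw [Finset.prod_univ_sum]
  rw [Fintype.piFinset_univ]

lemma lintegral_dataMeasure (F : (Fin n → Fin K × ℝ) → ℝ≥0∞) (hF : Measurable F) :
    ∫⁻ d, F d ∂(dataMeasure n πD Φ) =
      ∑ t : Fin n → Fin K, (∏ i, ENNReal.ofReal (πD (t i))) *
        ∫⁻ x, F (emb n t x) ∂(Measure.pi fun i => (Φ (t i) : Measure ℝ)) := by
  rw [dataMeasure_eq_sum n πD Φ, lintegral_finset_sum_measure]
  refine Finset.sum_congr rfl fun t _ => ?_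
  rw [lintegral_smul_measure, lintegral_map hF (measurable_emb n t), smul_eq_mul]

lemma integral_dataMeasure_of_comp_const (hπD : ∀ a, 0 ≤ πD a)
    (G : (Fin n → Fin K × ℝ) → ℝ) (hG : Measurable G) (γ : (Fin n → Fin K) → ℝ)
    (hGc : ∀ t x, G (emb n t x) = γ t) :
    ∫ d, G d ∂(dataMeasure n πD Φ) =
      ∑ t : Fin n → Fin K, (∏ i, πD (t i)) * γ t := by
  rw [dataMeasure_eq_sum n πD Φ]
  have hint : ∀ t : Fin n → Fin K,
      Integrable G ((Measure.pi fun i => (Φ (t i) : Measure ℝ)).map (emb n t)) := by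
    intro t
    refine (integrable_map_measure hG.aestronglyMeasurable
      (measurable_emb n t).aemeasurable).mpr ?_
    have : (G ∘ emb n t) = fun _ => γ t := funext fun x => hGc t x
    rw [this]
    exact integrable_const _
  have hne : ∀ t : Fin n → Fin K, (∏ i, ENNReal.ofReal (πD (t i))) ≠ ⊤ :=
    fun t => (ENNReal.prod_lt_top fun i _ => ENNReal.ofReal_lt_top).ne
  rw [integral_finset_sum_measure (fun t _ => (hint t).smul_measure (hne t))]
  refine Finset.sum_congr rfl fun t _ => ?_
  rw [integral_smul_measure, integral_map (measurable_emb n t).aemeasurable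
    hG.aestronglyMeasurable]
  have : ∀ x : Fin n → ℝ, G (emb n t x) = γ t := hGc t
  rw [integral_congr_ae (ae_of_all _ this), integral_const]
  have hm : ((∏ i, ENNReal.ofReal (πD (t i))).toReal) = ∏ i, πD (t i) := by
    rw [ENNReal.toReal_prod]
    exact Finset.prod_congr rfl fun i _ => ENNReal.toReal_ofReal (hπD (t i))
  simp [hm, smul_eq_mul]

end Decomp

section Meas

variable (n : ℕ) (a : Fin K)

lemma measurable_cnt : Measurable fun d : Fin n → Fin K × ℝ => cnt n d a := by
  unfold cnt
  simp_rw [Finset.card_filter]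
  refine Finset.measurable_sum _ fun i _ => ?_
  refine Measurable.ite ?_ measurable_const measurable_const
  exact (measurable_fst.comp (measurable_pi_apply i)) (measurableSet_singleton a)

lemma measurable_setcnt : MeasurableSet {d : Fin n → Fin K × ℝ | 0 < cnt n d a} :=
  measurable_cnt n a (by trivial : MeasurableSet {m : ℕ | 0 < m})

lemma measurable_rhat : Measurable fun d : Fin n → Fin K × ℝ => rhat n d a := by
  unfold rhat
  refine Measurable.ite (measurable_setcnt n a) ?_ measurable_const
  refine Measurable.div ?_ ?_
  · simp_rw [Finset.sum_filter]
    refine Finset.measurable_sum _ fun i _ => ?_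
    refine Measurable.ite ?_ (measurable_snd.comp (measurable_pi_apply i)) measurable_const
    exact (measurable_fst.comp (measurable_pi_apply i)) (measurableSet_singleton a)
  · exact measurable_from_top.comp (measurable_cnt n a)

lemma measurable_vReg (π : Fin K → ℝ) : Measurable (vReg n π) := by
  unfold vReg
  exact Finset.measurable_sum _ fun a _ => (measurable_rhat n a).const_mul _

lemma cnt_emb (t : Fin n → Fin K) (x : Fin n → ℝ) : cnt n (emb n t x) a = mcount t a := rfl

end Meas

section Emb

variable (n : ℕ) (π : Fin K → ℝ)

lemma vReg_emb (t : Fin n → Fin K) (x : Fin n → ℝ) :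
    vReg n π (emb n t x) = ∑ i, (π (t i) / (mcount t (t i) : ℝ)) * x i := by
  unfold vReg rhat
  rw [← Finset.sum_fiberwise Finset.univ t (fun i => (π (t i) / (mcount t (t i) : ℝ)) * x i)]
  refine Finset.sum_congr rfl fun a _ => ?_
  have hfib : ∀ i ∈ Finset.univ.filter (fun i => t i = a),
      (π (t i) / (mcount t (t i) : ℝ)) * x i = (π a / (mcount t a : ℝ)) * x i := by
    intro i hi
    rw [(Finset.mem_filter.mp hi).2]
  rw [Finset.sum_congr rfl hfib, ← Finset.mul_sum]
  have hfil : Finset.univ.filter (fun i => ((emb n t x) i).1 = a) =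
      Finset.univ.filter (fun i => t i = a) := rfl
  rw [cnt_emb, hfil]
  by_cases h : 0 < mcount t a
  · rw [if_pos h]
    have hsnd : ∑ i ∈ Finset.univ.filter (fun i => t i = a), ((emb n t x) i).2 =
        ∑ i ∈ Finset.univ.filter (fun i => t i = a), x i := rfl
    rw [hsnd]
    ring
  · rw [if_neg h]
    have : mcount t a = 0 := Nat.eq_zero_of_not_pos h
    have hempty : Finset.univ.filter (fun i => t i = a) = ∅ := Finset.card_eq_zero.mp this
    rw [hempty]
    simp

variable (σ2 r : Fin K → ℝ)

lemma fiber_sq_sum (t : Fin n → Fin K) :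
    ∑ i, (π (t i) / (mcount t (t i) : ℝ)) ^ 2 * σ2 (t i) =
      ∑ a, if 0 < mcount t a then π a ^ 2 * σ2 a / (mcount t a : ℝ) else 0 := by
  rw [← Finset.sum_fiberwise Finset.univ t
    (fun i => (π (t i) / (mcount t (t i) : ℝ)) ^ 2 * σ2 (t i))]
  refine Finset.sum_congr rfl fun a _ => ?_
  have hfib : ∀ i ∈ Finset.univ.filter (fun i => t i = a),
      (π (t i) / (mcount t (t i) : ℝ)) ^ 2 * σ2 (t i) =
        (π a / (mcount t a : ℝ)) ^ 2 * σ2 a := by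
    intro i hi
    rw [(Finset.mem_filter.mp hi).2]
  rw [Finset.sum_congr rfl hfib, Finset.sum_const]
  by_cases h : 0 < mcount t a
  · rw [if_pos h]
    have hm : (mcount t a : ℝ) ≠ 0 := Nat.cast_ne_zero.mpr h.ne'
    have hcard : (Finset.univ.filter (fun i => t i = a)).card = mcount t a := rfl
    rw [hcard, nsmul_eq_mul]
    field_simp
  · rw [if_neg h]
    have : mcount t a = 0 := Nat.eq_zero_of_not_pos h
    have hempty : Finset.univ.filter (fun i => t i = a) = ∅ := Finset.card_eq_zero.mp this
    rw [hempty]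
    simp

lemma fiber_mean_sum (t : Fin n → Fin K) :
    ∑ i, (π (t i) / (mcount t (t i) : ℝ)) * r (t i) =
      ∑ a, if 0 < mcount t a then π a * r a else 0 := by
  rw [← Finset.sum_fiberwise Finset.univ t
    (fun i => (π (t i) / (mcount t (t i) : ℝ)) * r (t i))]
  refine Finset.sum_congr rfl fun a _ => ?_
  have hfib : ∀ i ∈ Finset.univ.filter (fun i => t i = a),
      (π (t i) / (mcount t (t i) : ℝ)) * r (t i) = (π a / (mcount t a : ℝ)) * r a := by
    intro i hi
    rw [(Finset.mem_filter.mp hi).2]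
  rw [Finset.sum_congr rfl hfib, Finset.sum_const]
  by_cases h : 0 < mcount t a
  · rw [if_pos h]
    have hm : (mcount t a : ℝ) ≠ 0 := Nat.cast_ne_zero.mpr h.ne'
    have hcard : (Finset.univ.filter (fun i => t i = a)).card = mcount t a := rfl
    rw [hcard, nsmul_eq_mul]
    field_simp
  · rw [if_neg h]
    have : mcount t a = 0 := Nat.eq_zero_of_not_pos h
    have hempty : Finset.univ.filter (fun i => t i = a) = ∅ := Finset.card_eq_zero.mp this
    rw [hempty]
    simp

lemma bias_rewrite (t : Fin n → Fin K) :
    ((∑ a, if 0 < mcount t a then π a * r a else 0) - ∑ a, π a * r a) ^ 2 =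
      (∑ a, (π a * r a) * (if mcount t a = 0 then (1:ℝ) else 0)) ^ 2 := by
  have h : (∑ a, if 0 < mcount t a then π a * r a else 0) - ∑ a, π a * r a =
      -(∑ a, (π a * r a) * (if mcount t a = 0 then (1:ℝ) else 0)) := by
    rw [← Finset.sum_neg_distrib, ← Finset.sum_sub_distrib]
    refine Finset.sum_congr rfl fun a _ => ?_
    by_cases h : 0 < mcount t a
    · rw [if_pos h, if_neg h.ne', sub_self]
      ring
    · rw [if_neg h, if_pos (Nat.eq_zero_of_not_pos h)]
      ring
  rw [h, neg_sq]

end Emb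

/-- Proposition 2, upper bound: for nonnegative mean rewards,
`MSE(v̂_Reg) ≤ V_{0,n} + (V₁ + V_{3,n})/n` with `p_{a,n} = (1 − π_D(a))^n`,
`V_{0,n} = (Σ_a π(a) r_Φ(a) p_{a,n})² + Σ_a π(a)² r_Φ(a)² p_{a,n}(1 − p_{a,n})`,
`V₁ = Σ_a π(a)² σ²_Φ(a)/π_D(a)`, and
`V_{3,n} = Σ_a E[1{n(a)>0}·n/n(a) − 1/π_D(a)] π(a)² σ²_Φ(a)`
(note `1/π̂_D(a) = n/n(a)`). -/
theorem mse_vReg_upper_bound {K : ℕ} (n : ℕ) (hn : 0 < n)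
    (π πD : Fin K → ℝ) (hπ : IsPolicy π) (hπD : IsBehaviorPolicy πD)
    (Φ : Fin K → ProbabilityMeasure ℝ)
    (hΦ : ∀ a, MemLp (fun x => x) 2 (Φ a : Measure ℝ))
    (hr : ∀ a, 0 ≤ envMean Φ a) :
    mse n π πD Φ (vReg n π) ≤
      ENNReal.ofReal (
        ((∑ a, π a * envMean Φ a * (1 - πD a) ^ n) ^ 2 +
          ∑ a, π a ^ 2 * envMean Φ a ^ 2 *
            ((1 - πD a) ^ n * (1 - (1 - πD a) ^ n))) +
        ((∑ a, π a ^ 2 * envVar Φ a / πD a) +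
          ∑ a, (∫ d, ((if 0 < cnt n d a then (n : ℝ) / (cnt n d a : ℝ) else 0) - 1 / πD a)
              ∂(dataMeasure n πD Φ)) * (π a ^ 2 * envVar Φ a)) / n) := by
  classical
  have hσ2 : ∀ a, 0 ≤ envVar Φ a := fun a => integral_nonneg fun y => sq_nonneg _
  have hFmeas : Measurable fun d : Fin n → Fin K × ℝ =>
      ENNReal.ofReal ((vReg n π d - value π Φ) ^ 2) :=
    ENNReal.measurable_ofReal.comp
      (((measurable_vReg n π).sub measurable_const).pow_const 2)
  set E : (Fin n → Fin K) → ℝ := fun t =>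
    (∑ a, if 0 < mcount t a then π a ^ 2 * envVar Φ a / (mcount t a : ℝ) else 0) +
    ((∑ a, if 0 < mcount t a then π a * envMean Φ a else 0) - value π Φ) ^ 2 with hE_def
  have hE_nonneg : ∀ t, 0 ≤ E t := by
    intro t
    refine add_nonneg (Finset.sum_nonneg fun a _ => ?_) (sq_nonneg _)
    by_cases h : 0 < mcount t a
    · rw [if_pos h]
      have := hσ2 a
      positivity
    · rw [if_neg h]
  -- per-assignment integral
  have hstep : ∀ t : Fin n → Fin K,
      ∫⁻ x, ENNReal.ofReal ((vReg n π (emb n t x) - value π Φ) ^ 2)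
          ∂(Measure.pi fun i => (Φ (t i) : Measure ℝ)) = ENNReal.ofReal (E t) := by
    intro t
    have hfun : ∀ x : Fin n → ℝ, (vReg n π (emb n t x) - value π Φ) ^ 2 =
        (∑ i, (π (t i) / (mcount t (t i) : ℝ)) * x i + (- value π Φ)) ^ 2 := by
      intro x
      rw [vReg_emb, sub_eq_add_neg]
    simp_rw [hfun]
    rw [← ofReal_integral_eq_lintegral_ofReal
      (key_integrable _ (fun i => hΦ (t i)) _ _) (ae_of_all _ fun x => sq_nonneg _)]
    congr 1
    rw [key_integral _ (fun i => hΦ (t i)) _ _]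
    have h1 : ∀ i : Fin n, (∫ z, z ∂((Φ (t i) : Measure ℝ))) = envMean Φ (t i) :=
      fun i => rfl
    have h2 : ∀ i : Fin n,
        (∫ y, (y - ∫ z, z ∂((Φ (t i) : Measure ℝ))) ^ 2 ∂((Φ (t i) : Measure ℝ)))
          = envVar Φ (t i) := fun i => rfl
    simp only [h2, h1]
    have h2' : ∀ i : Fin n,
        (∫ y, (y - envMean Φ (t i)) ^ 2 ∂((Φ (t i) : Measure ℝ))) = envVar Φ (t i) :=
      fun i => rfl
    simp only [h2']
    rw [fiber_sq_sum n π (envVar Φ) t, fiber_mean_sum n π (envMean Φ) t]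
    simp only [hE_def, sub_eq_add_neg]
  -- measure decomposition
  have hmse : mse n π πD Φ (vReg n π) = ∑ t : Fin n → Fin K,
      (∏ i, ENNReal.ofReal (πD (t i))) * ENNReal.ofReal (E t) := by
    unfold mse
    rw [lintegral_dataMeasure n πD Φ _ hFmeas]
    exact Finset.sum_congr rfl fun t _ => by rw [hstep t]
  have hwr : ∀ t : Fin n → Fin K, (0:ℝ) ≤ ∏ i, πD (t i) :=
    fun t => Finset.prod_nonneg fun i _ => (hπD.1 _).le
  have hsum1 : mse n π πD Φ (vReg n π) =
      ENNReal.ofReal (∑ t : Fin n → Fin K, (∏ i, πD (t i)) * E t) := by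
    rw [hmse, ENNReal.ofReal_sum_of_nonneg (fun t _ => mul_nonneg (hwr t) (hE_nonneg t))]
    refine Finset.sum_congr rfl fun t _ => ?_
    rw [ENNReal.ofReal_mul (hwr t), ENNReal.ofReal_prod_of_nonneg (fun i _ => (hπD.1 _).le)]
  rw [hsum1]
  refine ENNReal.ofReal_le_ofReal ?_
  -- rewrite the V3 integrals as finite sums
  have hint : ∀ a : Fin K,
      ∫ d, ((if 0 < cnt n d a then (n : ℝ) / (cnt n d a : ℝ) else 0) - 1 / πD a)
          ∂(dataMeasure n πD Φ) =
      ∑ t : Fin n → Fin K, (∏ i, πD (t i)) *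
        ((if 0 < mcount t a then (n : ℝ) / (mcount t a : ℝ) else 0) - 1 / πD a) := by
    intro a
    refine integral_dataMeasure_of_comp_const n πD Φ (fun b => (hπD.1 b).le) _ ?_ _ ?_
    · refine Measurable.sub ?_ measurable_const
      refine Measurable.ite (measurable_setcnt n a) ?_ measurable_const
      exact Measurable.div measurable_const (measurable_from_top.comp (measurable_cnt n a))
    · intro t x
      rfl
  simp_rw [hint]
  -- split the left-hand side
  have hv : value π Φ = ∑ a, π a * envMean Φ a := rfl
  have hsplit : ∑ t : Fin n → Fin K, (∏ i, πD (t i)) * E t =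
      (∑ t : Fin n → Fin K, (∏ i, πD (t i)) *
        (∑ a, if 0 < mcount t a then π a ^ 2 * envVar Φ a / (mcount t a : ℝ) else 0)) +
      ∑ t : Fin n → Fin K, (∏ i, πD (t i)) *
        ((∑ a, (π a * envMean Φ a) * (if mcount t a = 0 then (1:ℝ) else 0)) ^ 2) := by
    rw [← Finset.sum_add_distrib]
    refine Finset.sum_congr rfl fun t _ => ?_
    rw [hE_def]
    simp only []
    rw [hv, bias_rewrite n π (envMean Φ) t, mul_add]
  rw [hsplit]
  have claim1 : ∑ t : Fin n → Fin K, (∏ i, πD (t i)) *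
        (∑ a, if 0 < mcount t a then π a ^ 2 * envVar Φ a / (mcount t a : ℝ) else 0) =
      ((∑ a, π a ^ 2 * envVar Φ a / πD a) +
        ∑ a, (∑ t : Fin n → Fin K, (∏ i, πD (t i)) *
          ((if 0 < mcount t a then (n : ℝ) / (mcount t a : ℝ) else 0) - 1 / πD a)) *
            (π a ^ 2 * envVar Φ a)) / n :=
    variance_identity πD hn hπD.2 (fun a => π a ^ 2 * envVar Φ a)
  have claim2 : ∑ t : Fin n → Fin K, (∏ i, πD (t i)) *
        ((∑ a, (π a * envMean Φ a) * (if mcount t a = 0 then (1:ℝ) else 0)) ^ 2) ≤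
      (∑ a, (π a * envMean Φ a) * (1 - πD a) ^ n) ^ 2 +
        ∑ a, (π a * envMean Φ a) ^ 2 * ((1 - πD a) ^ n * (1 - (1 - πD a) ^ n)) :=
    bias_bound πD hπD.1 hπD.2 (fun a => π a * envMean Φ a)
      (fun a => mul_nonneg (hπ.1 a) (hr a))
  have hB1 : (∑ a, π a * envMean Φ a * (1 - πD a) ^ n) ^ 2 =
      (∑ a, (π a * envMean Φ a) * (1 - πD a) ^ n) ^ 2 := rfl
  have hB2 : ∑ a, π a ^ 2 * envMean Φ a ^ 2 * ((1 - πD a) ^ n * (1 - (1 - πD a) ^ n)) =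
      ∑ a, (π a * envMean Φ a) ^ 2 * ((1 - πD a) ^ n * (1 - (1 - πD a) ^ n)) :=
    Finset.sum_congr rfl fun a _ => by rw [mul_pow]
  rw [hB1, hB2, claim1]
  linarith [claim2]

end OffPolicy
end
end
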